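/- Let M and L̃ be odd positive integers, L = L̃M², and let l, m be integers with 1 ≤ l ≤ (L̃−1)/2 and 0 ≤ m ≤ M−1. Set x_m = lM + m·L̃M. Then the rational number x_m(L − x_m)/(2L) − lM(L − lM)/(2L) is an integer. (This verifies that the conformal weights ℓ(L−ℓ)/(2L) of the SO(L) level 2 antisymmetric tensors combined in one block of the new modular invariant agree modulo 1, i.e. T-invariance of the diagonal blocks.) -/
import Mathlib


/-- For odd positive `M`, `L̃`, `L = L̃M²`, `1 ≤ l ≤ (L̃−1)/2`, `0 ≤ m ≤ M−1`
and `x_m = lM + m·L̃M`, the rational number `x_m(L−x_m)/(2L) − lM(L−lM)/(2L)` is an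
integer. -/
theorem so_level2_block_weights_integral (M Lt L : ℕ) (hM : Odd M) (hLt : Odd Lt)
    (hL : L = Lt * M ^ 2) (l m : ℕ) (hl1 : 1 ≤ l) (hl2 : l ≤ (Lt - 1) / 2) (hm : m ≤ M - 1) :
    ∃ z : ℤ,
      ((l * M + m * Lt * M : ℕ) : ℚ) * ((L : ℚ) - ((l * M + m * Lt * M : ℕ) : ℚ)) / (2 * L)
        - ((l * M : ℕ) : ℚ) * ((L : ℚ) - ((l * M : ℕ) : ℚ)) / (2 * L) = (z : ℚ) := by
  have hMpos : 0 < M := hM.pos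
  have hLtpos : 0 < Lt := hLt.pos
  have h2 : ∃ z : ℤ, 2 * z = (m : ℤ) * ((Lt : ℤ) * ((M : ℤ) - m) - 2 * l) := by
    rcases Nat.even_or_odd m with ⟨k, hk⟩ | ⟨k, hk⟩
    · refine ⟨(k : ℤ) * ((Lt : ℤ) * ((M : ℤ) - m) - 2 * l), ?_⟩
      have : (m : ℤ) = 2 * k := by omega
      rw [this]; ring
    · obtain ⟨a, ha⟩ := hM
      refine ⟨(m : ℤ) * ((Lt : ℤ) * ((a : ℤ) - k) - l), ?_⟩
      have : (M : ℤ) - m = 2 * ((a : ℤ) - k) := by omega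
      rw [this]; ring
  obtain ⟨z, hz⟩ := h2
  refine ⟨z, ?_⟩
  have hzQ : (m : ℚ) * ((Lt : ℚ) * ((M : ℚ) - m) - 2 * l) = 2 * z := by
    exact_mod_cast hz.symm
  have hLpos : 0 < L := by rw [hL]; positivity
  have hLQ : (L : ℚ) ≠ 0 := by exact_mod_cast hLpos.ne'
  rw [div_sub_div_same, div_eq_iff (by positivity : (2 * (L : ℚ)) ≠ 0)]
  subst hL
  push_cast
  linear_combination ((Lt : ℚ) * (M : ℚ) ^ 2) * hzQ
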